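/- Let f(z) = Σ_{k≥0} ξ_k e^{−αk²} z^k where ξ_k ∈ {−1, +1} is an arbitrary sequence of signs and α ≥ log 3. Then for every sufficiently large m ∈ ℕ, the function f has exactly m zeros (counted with multiplicity) in the closed disk {|z| ≤ e^{2αm}}. -/

import Mathlib

open Complex

set_option maxHeartbeats 1000000
section
open Metric Set Filter Finset

namespace Stmt10


lemma aux_radius {α : ℝ} (hα : 1 ≤ α) {c : ℕ → ℂ}
    (hc : ∀ k : ℕ, ‖c k‖ = Real.exp (-(α * k ^ 2))) :
    (FormalMultilinearSeries.ofScalars ℂ c).radius = ⊤ := by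
  apply FormalMultilinearSeries.ofScalars_radius_eq_top_of_tendsto
  · filter_upwards with n h
    have h2 := hc n
    rw [h, norm_zero] at h2
    exact (Real.exp_pos _).ne h2
  · have h1 : ∀ n : ℕ, ‖c (n + 1)‖ / ‖c n‖ = Real.exp (-(α * (2 * n + 1))) := by
      intro n
      rw [hc, hc, ← Real.exp_sub]
      congr 1
      push_cast
      ring
    simp only [Nat.succ_eq_add_one, h1]
    apply Real.tendsto_exp_atBot.comp
    apply Filter.tendsto_neg_atBot_iff.mpr
    apply Filter.Tendsto.const_mul_atTop (by linarith : (0:ℝ) < α)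
    apply Filter.tendsto_atTop_add_const_right
    exact (tendsto_natCast_atTop_atTop (R := ℝ)).const_mul_atTop two_pos

lemma aux_summable {α : ℝ} (hα : 1 ≤ α) {c : ℕ → ℂ}
    (hc : ∀ k : ℕ, ‖c k‖ = Real.exp (-(α * k ^ 2))) (r : ℝ) (hr : 0 ≤ r) :
    Summable (fun k : ℕ => ‖c k‖ * r ^ k) := by
  have h := (FormalMultilinearSeries.ofScalars ℂ c).summable_norm_mul_pow (r := r.toNNReal)
    (by rw [aux_radius hα hc]; exact ENNReal.coe_lt_top)
  have he : ∀ n : ℕ, ‖(FormalMultilinearSeries.ofScalars ℂ c) n‖ = ‖c n‖ :=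
    fun n => FormalMultilinearSeries.ofScalars_norm ℂ c n
  simp only [he, Real.coe_toNNReal r hr] at h
  exact h

lemma aux_entire {α : ℝ} (hα : 1 ≤ α) {c : ℕ → ℂ}
    (hc : ∀ k : ℕ, ‖c k‖ = Real.exp (-(α * k ^ 2))) :
    Differentiable ℂ (fun z : ℂ => ∑' k : ℕ, c k * z ^ k) := by
  have hfeq : (fun z : ℂ => ∑' k : ℕ, c k * z ^ k)
      = (FormalMultilinearSeries.ofScalars ℂ c).sum := by
    funext z
    rw [show (FormalMultilinearSeries.ofScalars ℂ c).sum z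
        = FormalMultilinearSeries.ofScalarsSum c z from rfl,
      FormalMultilinearSeries.ofScalars_sum_eq]
    simp [smul_eq_mul]
  have hrad := aux_radius hα hc
  have hball := (FormalMultilinearSeries.ofScalars ℂ c).hasFPowerSeriesOnBall
    (by rw [hrad]; exact ENNReal.zero_lt_top)
  rw [hrad] at hball
  intro z
  rw [hfeq]
  exact (hball.analyticAt_of_mem (by simp [edist_lt_top])).differentiableAt




lemma aux_estimate {α : ℝ} (hα : 1 ≤ α) (hα3 : Real.exp (-α) ≤ 1/3) {c : ℕ → ℂ}
    (hc : ∀ k : ℕ, ‖c k‖ = Real.exp (-(α * k ^ 2))) (m : ℕ) {z : ℂ}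
    (hz : ‖z‖ = Real.exp (2 * α * m)) :
    ‖(∑' k : ℕ, c k * z ^ k) - c m * z ^ m‖ ≤ 3 / 4 * Real.exp (α * m ^ 2) := by
  set q : ℝ := Real.exp (-(2 * α)) with hqdef
  have hq0 : 0 < q := Real.exp_pos _
  have hqe : q = Real.exp (-α) * Real.exp (-α) := by
    rw [hqdef, ← Real.exp_add]; ring_nf
  have hq9 : q ≤ 1 / 9 := by
    rw [hqe]
    calc Real.exp (-α) * Real.exp (-α) ≤ (1/3) * (1/3) :=
          mul_le_mul hα3 hα3 (Real.exp_pos _).le (by norm_num)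
      _ = 1/9 := by norm_num
  have hq1 : q < 1 := lt_of_le_of_lt hq9 (by norm_num)
  set a : ℕ → ℂ := fun k => c k * z ^ k with hadef
  set D : ℝ := Real.exp (α * m ^ 2) * Real.exp α with hDdef
  have hD0 : 0 < D := mul_pos (Real.exp_pos _) (Real.exp_pos _)
  have hnorm : ∀ k : ℕ, ‖a k‖ = Real.exp (α * ((m : ℝ) ^ 2 - ((k : ℝ) - m) ^ 2)) := by
    intro k
    rw [hadef]
    simp only [norm_mul, norm_pow, hc, hz]
    rw [← Real.exp_nat_mul, ← Real.exp_add]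
    congr 1
    ring
  have hDbound : ∀ (k j : ℕ), 1 ≤ j → (((k : ℝ) - m) ^ 2 = (j : ℝ) ^ 2) →
      ‖a k‖ ≤ D * q ^ j := by
    intro k j hj hsq
    rw [hnorm, hsq, hDdef, hqdef, ← Real.exp_nat_mul, ← Real.exp_add, ← Real.exp_add]
    apply Real.exp_le_exp.mpr
    have hj1 : (1 : ℝ) ≤ (j : ℝ) := by exact_mod_cast hj
    nlinarith [sq_nonneg ((j : ℝ) - 1), hα]
  have hS : Summable (fun k => ‖a k‖) := by
    have := aux_summable hα hc ‖z‖ (norm_nonneg z)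
    simpa [hadef, norm_mul, norm_pow] using this
  have hSa : Summable a := hS.of_norm
  set b : ℕ → ℝ := fun k => ‖if k = m then 0 else a k‖ with hbdef
  have hble : ∀ k, b k ≤ ‖a k‖ := by
    intro k; rw [hbdef]; dsimp only
    split_ifs with h
    · simp [norm_nonneg]
    · exact le_rfl
  have hb : Summable b :=
    Summable.of_nonneg_of_le (fun k => norm_nonneg _) hble hS
  have h0 : (∑' k : ℕ, a k) - a m = ∑' k : ℕ, if k = m then 0 else a k := by
    rw [Summable.tsum_eq_add_tsum_ite hSa m, add_sub_cancel_left]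
  rw [hadef] at h0
  rw [show (∑' k : ℕ, c k * z ^ k) - c m * z ^ m
      = ∑' k : ℕ, if k = m then 0 else c k * z ^ k from h0]
  have hnt : ‖∑' k : ℕ, if k = m then 0 else c k * z ^ k‖ ≤ ∑' k, b k :=
    norm_tsum_le_tsum_norm hb
  refine hnt.trans ?_
  -- geometric sum bound
  have hgeo : ∑' j : ℕ, q ^ j = (1 - q)⁻¹ := tsum_geometric_of_lt_one hq0.le hq1
  have hgeoS : Summable (fun j : ℕ => q ^ j) := summable_geometric_of_lt_one hq0.le hq1
  have hsplit := (Summable.sum_add_tsum_nat_add (f := b) (m + 1) hb).symm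
  rw [hsplit]
  -- finite part
  have hfin : ∑ i ∈ range (m + 1), b i ≤ D * q * (1 - q)⁻¹ := by
    rw [Finset.sum_range_succ, show b m = 0 by simp [hbdef]]
    rw [add_zero]
    have hstep : ∀ i ∈ range m, b i ≤ D * q * q ^ (m - 1 - i) := by
      intro i hi
      rw [Finset.mem_range] at hi
      have h1 : b i = ‖a i‖ := by rw [hbdef]; simp [Nat.ne_of_lt hi]
      have h2 : ‖a i‖ ≤ D * q ^ (m - i) := by
        apply hDbound i (m - i) (by omega)
        have : ((m - i : ℕ) : ℝ) = (m : ℝ) - i := by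
          push_cast [Nat.cast_sub hi.le]; ring
        rw [this]; ring
      have h3 : m - i = (m - 1 - i) + 1 := by omega
      rw [h3, pow_succ] at h2
      rw [h1]
      calc ‖a i‖ ≤ D * (q ^ (m - 1 - i) * q) := h2
        _ = D * q * q ^ (m - 1 - i) := by ring
    calc ∑ i ∈ range m, b i ≤ ∑ i ∈ range m, D * q * q ^ (m - 1 - i) :=
          Finset.sum_le_sum hstep
      _ = D * q * ∑ i ∈ range m, q ^ (m - 1 - i) := by rw [Finset.mul_sum]
      _ = D * q * ∑ i ∈ range m, q ^ i := by
          congr 1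
          exact Finset.sum_range_reflect (fun i => q ^ i) m
      _ ≤ D * q * (1 - q)⁻¹ := by
          apply mul_le_mul_of_nonneg_left _ (by positivity)
          rw [← hgeo]
          exact Summable.sum_le_tsum (range m) (fun i _ => by positivity) hgeoS
  -- tail part
  have htail : ∑' i : ℕ, b (i + (m + 1)) ≤ D * q * (1 - q)⁻¹ := by
    have hstep : ∀ i : ℕ, b (i + (m + 1)) ≤ D * q * q ^ i := by
      intro i
      have h1 : b (i + (m + 1)) = ‖a (i + (m + 1))‖ := by
        rw [hbdef]; simp [Nat.ne_of_gt (by omega : m < i + (m + 1))]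
      have h2 : ‖a (i + (m + 1))‖ ≤ D * q ^ (i + 1) := by
        apply hDbound _ (i + 1) (by omega)
        push_cast; ring
      rw [h1, pow_succ] at *
      calc ‖a (i + (m + 1))‖ ≤ D * (q ^ i * q) := h2
        _ = D * q * q ^ i := by ring
    calc ∑' i : ℕ, b (i + (m + 1)) ≤ ∑' i : ℕ, D * q * q ^ i := by
          apply Summable.tsum_le_tsum hstep ((summable_nat_add_iff (m + 1)).mpr hb)
          exact hgeoS.mul_left _
      _ = D * q * (1 - q)⁻¹ := by rw [tsum_mul_left, hgeo]
  -- combine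
  have hnum : D * q * (1 - q)⁻¹ + D * q * (1 - q)⁻¹ ≤ 3 / 4 * Real.exp (α * m ^ 2) := by
    have hDq : D * q = Real.exp (α * m ^ 2) * Real.exp (-α) := by
      rw [hDdef, hqdef, mul_assoc, ← Real.exp_add]
      congr 2
      ring
    have hinv : (1 - q)⁻¹ ≤ 9 / 8 := by
      rw [show (9 : ℝ) / 8 = (8 / 9 : ℝ)⁻¹ by norm_num]
      apply inv_anti₀ (by norm_num)
      linarith
    have hE0 : (0 : ℝ) < Real.exp (α * m ^ 2) := Real.exp_pos _
    have h1 : D * q * (1 - q)⁻¹ ≤ Real.exp (α * m ^ 2) * (1/3) * (9/8) := by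
      rw [hDq]
      apply mul_le_mul _ hinv (inv_nonneg.mpr (by linarith)) (by positivity)
      exact mul_le_mul_of_nonneg_left hα3 hE0.le
    nlinarith
  linarith [hfin, htail]



lemma aux_int_add {f g : ℂ → ℂ} {c : ℂ} {R : ℝ} (hf : CircleIntegrable f c R)
    (hg : CircleIntegrable g c R) :
    (∮ z in C(c, R), (f z + g z)) = (∮ z in C(c, R), f z) + ∮ z in C(c, R), g z := by
  simp only [circleIntegral, smul_add, intervalIntegral.integral_add hf.out hg.out]

lemma aux_deriv_diff {g : ℂ → ℂ} (hg : Differentiable ℂ g) : Differentiable ℂ (deriv g) := by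
  have hAn : AnalyticOnNhd ℂ g univ := fun z _ => hg.analyticAt z
  exact fun z => (hAn.deriv z (mem_univ z)).differentiableAt

lemma aux_int0 {g : ℂ → ℂ} (hg : Differentiable ℂ g) {R : ℝ} (hR : 0 < R)
    (hne : ∀ z ∈ closedBall (0 : ℂ) R, g z ≠ 0) :
    (∮ z in C(0, R), deriv g z / g z) = 0 := by
  have hdg := aux_deriv_diff hg
  have hd : ∀ z ∈ closedBall (0 : ℂ) R, DifferentiableAt ℂ (fun z => deriv g z / g z) z :=
    fun z hz => (hdg z).div (hg z) (hne z hz)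
  apply circleIntegral_eq_zero_of_differentiable_on_off_countable hR.le countable_empty
  · exact fun z hz => (hd z hz).continuousAt.continuousWithinAt
  · exact fun z hz => hd z (ball_subset_closedBall hz.1)

lemma aux_step {f g : ℂ → ℂ} (hg : Differentiable ℂ g) {z₀ : ℂ} {R : ℝ} (hR : 0 < R)
    (hz₀ : z₀ ∈ ball (0 : ℂ) R) (hfac : ∀ z, f z = (z - z₀) * g z)
    (hgne : ∀ z ∈ sphere (0 : ℂ) R, g z ≠ 0) :
    (∮ z in C(0, R), deriv f z / f z)
      = 2 * Real.pi * I + ∮ z in C(0, R), deriv g z / g z := by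
  have hdg := aux_deriv_diff hg
  have hsne : ∀ z ∈ sphere (0 : ℂ) R, z ≠ z₀ := by
    intro z hz h
    rw [mem_sphere_iff_norm, sub_zero] at hz
    rw [mem_ball, dist_zero_right] at hz₀
    rw [h] at hz; linarith [hz ▸ hz₀]
  have hEq : EqOn (fun z => deriv f z / f z)
      (fun z => (z - z₀)⁻¹ + deriv g z / g z) (sphere (0 : ℂ) R) := by
    intro z hz
    have hzz : z - z₀ ≠ 0 := sub_ne_zero.mpr (hsne z hz)
    have hgz : g z ≠ 0 := hgne z hz
    have hder : HasDerivAt f (1 * g z + (z - z₀) * deriv g z) z := by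
      have h1 : HasDerivAt (fun y => (y - z₀) * g y) (1 * g z + (z - z₀) * deriv g z) z :=
        ((hasDerivAt_id z).sub_const z₀).mul (hg z).hasDerivAt
      exact h1.congr_of_eventuallyEq (Eventually.of_forall hfac)
    have hderiv : deriv f z = g z + (z - z₀) * deriv g z := by
      rw [hder.deriv]; ring
    show deriv f z / f z = _
    rw [hderiv, hfac z]
    field_simp
  rw [circleIntegral.integral_congr hR.le hEq]
  have i1 : CircleIntegrable (fun z => (z - z₀)⁻¹) 0 R := by
    apply ContinuousOn.circleIntegrable hR.le
    exact ((continuous_id.sub continuous_const).continuousOn).inv₀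
      (fun z hz => sub_ne_zero.mpr (hsne z hz))
  have i2 : CircleIntegrable (fun z => deriv g z / g z) 0 R := by
    apply ContinuousOn.circleIntegrable hR.le
    exact ((hdg.continuous.continuousOn).div (hg.continuous.continuousOn)
      (fun z hz => hgne z hz))
  rw [aux_int_add i1 i2, circleIntegral.integral_sub_inv_of_mem_ball hz₀]

lemma aux_prod_diff {k : ℕ} (w : Fin k → ℂ) :
    Differentiable ℂ (fun z : ℂ => ∏ i, (z - w i)) := by
  induction k with
  | zero => simpa using differentiable_const (1 : ℂ)
  | succ k ih =>
      have : (fun z : ℂ => ∏ i : Fin (k+1), (z - w i))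
          = fun z => (z - w 0) * ∏ i : Fin k, (z - w i.succ) := by
        funext z; rw [Fin.prod_univ_succ]
      rw [this]
      exact (differentiable_id.sub_const _).mul (ih _)

lemma aux_count {R : ℝ} (hR : 0 < R) : ∀ (k : ℕ) (f g : ℂ → ℂ) (zs : Fin k → ℂ),
    Differentiable ℂ g → (∀ i, zs i ∈ ball (0 : ℂ) R) →
    (∀ z ∈ closedBall (0 : ℂ) R, g z ≠ 0) →
    (∀ z, f z = (∏ i, (z - zs i)) * g z) →
    (∮ z in C(0, R), deriv f z / f z) = 2 * Real.pi * I * k := by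
  intro k
  induction k with
  | zero =>
      intro f g zs hg hzs hgne hfac
      have hfg : f = g := funext fun z => by simpa using hfac z
      rw [hfg, aux_int0 hg hR hgne]
      simp
  | succ k ih =>
      intro f g zs hg hzs hgne hfac
      set f₁ : ℂ → ℂ := fun z => (∏ i : Fin k, (z - zs i.succ)) * g z with hf₁
      have hd₁ : Differentiable ℂ f₁ := (aux_prod_diff _).mul hg
      have hsne : ∀ i (z : ℂ), z ∈ sphere (0 : ℂ) R → z - zs i ≠ 0 := by
        intro i z hz h
        rw [mem_sphere_iff_norm, sub_zero] at hz
        have := hzs i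
        rw [mem_ball, dist_zero_right] at this
        rw [sub_eq_zero] at h
        rw [h] at hz
        linarith
      have h₁ne : ∀ z ∈ sphere (0 : ℂ) R, f₁ z ≠ 0 := by
        intro z hz
        apply mul_ne_zero
        · exact Finset.prod_ne_zero_iff.mpr fun i _ => hsne _ z hz
        · exact hgne z (sphere_subset_closedBall hz)
      have hfac' : ∀ z, f z = (z - zs 0) * f₁ z := by
        intro z
        rw [hfac z, hf₁, Fin.prod_univ_succ]
        ring
      rw [aux_step hd₁ hR (hzs 0) hfac' h₁ne,
        ih f₁ g (fun i => zs i.succ) hg (fun i => hzs i.succ) hgne (fun z => rfl)]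
      push_cast
      ring




lemma aux_int_m {cm : ℂ} {f : ℂ → ℂ} (hfd : Differentiable ℂ f)
    (m : ℕ) {R : ℝ} (hR : 0 < R) (hcm : cm ≠ 0)
    (hest : ∀ z ∈ sphere (0 : ℂ) R, ‖f z - cm * z ^ m‖ < ‖cm * z ^ m‖) :
    (∮ z in C(0, R), deriv f z / f z) = 2 * Real.pi * I * m := by
  set h : ℂ → ℂ := fun z => cm * z ^ m with hhdef
  set w : ℂ → ℂ := fun z => f z / h z with hwdef
  have hz0 : ∀ z ∈ sphere (0 : ℂ) R, z ≠ 0 := by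
    intro z hz h0
    rw [mem_sphere_iff_norm, sub_zero, h0, norm_zero] at hz
    linarith
  have hhz : ∀ z ∈ sphere (0 : ℂ) R, h z ≠ 0 :=
    fun z hz => mul_ne_zero hcm (pow_ne_zero _ (hz0 z hz))
  have hfz : ∀ z ∈ sphere (0 : ℂ) R, f z ≠ 0 := by
    intro z hz h0
    have := hest z hz
    rw [h0, zero_sub, norm_neg] at this
    exact lt_irrefl _ this
  have hwne : ∀ z ∈ sphere (0 : ℂ) R, ‖w z - 1‖ < 1 := by
    intro z hz
    have h1 : w z - 1 = (f z - h z) / h z := by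
      rw [hwdef]
      field_simp [hhz z hz]
    rw [h1, norm_div, div_lt_one (norm_pos_iff.mpr (hhz z hz))]
    exact hest z hz
  have hslit : ∀ z ∈ sphere (0 : ℂ) R, w z ∈ slitPlane := by
    intro z hz
    apply Complex.mem_slitPlane_iff.mpr
    left
    have h5 : (1 - w z).re ≤ ‖1 - w z‖ := by
      simpa using Complex.re_le_norm (1 - w z)
    have h6 : ‖1 - w z‖ < 1 := by rw [norm_sub_rev]; exact hwne z hz
    have h7 : (w z).re = 1 - (1 - w z).re := by simp [Complex.sub_re]
    rw [h7]; linarith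
  -- derivative computation on the sphere
  have hkey : ∀ z ∈ sphere (0 : ℂ) R,
      HasDerivAt (fun y => Complex.log (w y)) (deriv f z / f z - m * z⁻¹) z := by
    intro z hz
    have hz0' := hz0 z hz
    have hhz' := hhz z hz
    have hfz' := hfz z hz
    have hpow : HasDerivAt (fun y : ℂ => y ^ m) ((m : ℂ) * z ^ m / z) z := by
      have := hasDerivAt_pow m z
      refine this.congr_deriv ?_
      cases m with
      | zero => simp
      | succ n =>
          rw [Nat.add_sub_cancel, pow_succ, mul_div_assoc, mul_div_cancel_right₀ _ hz0']
    have hh' : HasDerivAt h (cm * ((m : ℂ) * z ^ m / z)) z := hpow.const_mul cm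
    have hw' : HasDerivAt w
        ((deriv f z * h z - f z * (cm * ((m : ℂ) * z ^ m / z))) / h z ^ 2) z :=
      (hfd z).hasDerivAt.div hh' hhz'
    have hlog := hw'.clog (hslit z hz)
    convert hlog using 1
    rw [hwdef]
    have hwz : f z / h z ≠ 0 := div_ne_zero hfz' hhz'
    rw [hhdef]
    field_simp
  -- integrability of the two pieces
  have hcont : ContinuousOn (fun z => deriv f z / f z) (sphere (0 : ℂ) R) := by
    have hdg : Differentiable ℂ (deriv f) := by
      have hAn : AnalyticOnNhd ℂ f univ := fun z _ => hfd.analyticAt z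
      exact fun z => (hAn.deriv z (mem_univ z)).differentiableAt
    exact (hdg.continuous.continuousOn).div (hfd.continuous.continuousOn) hfz
  have i2 : CircleIntegrable (fun z => (m : ℂ) * z⁻¹) 0 R := by
    apply ContinuousOn.circleIntegrable hR.le
    exact continuousOn_const.mul (((continuous_id).continuousOn).inv₀ hz0)
  have i1 : CircleIntegrable (fun z => deriv f z / f z - m * z⁻¹) 0 R := by
    apply ContinuousOn.circleIntegrable hR.le
    exact hcont.sub (continuousOn_const.mul (((continuous_id).continuousOn).inv₀ hz0))
  have hEq : EqOn (fun z => deriv f z / f z)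
      (fun z => (deriv f z / f z - m * z⁻¹) + m * z⁻¹) (sphere (0 : ℂ) R) := by
    intro z _; simp
  rw [circleIntegral.integral_congr hR.le hEq, aux_int_add i1 i2]
  have hzero : (∮ z in C(0, R), (deriv f z / f z - m * z⁻¹)) = 0 := by
    apply circleIntegral.integral_eq_zero_of_hasDerivWithinAt hR.le
    intro z hz
    exact (hkey z hz).hasDerivWithinAt
  have hsub : (∮ z in C(0, R), (m : ℂ) * z⁻¹) = 2 * Real.pi * I * m := by
    have h0b : (0 : ℂ) ∈ ball (0 : ℂ) R := by simpa using hR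
    have := circleIntegral.integral_sub_inv_of_mem_ball h0b
    simp only [sub_zero] at this
    rw [circleIntegral.integral_const_mul, this]
    ring
  rw [hzero, hsub, zero_add]



lemma aux_strip {f : ℂ → ℂ} (hf : Differentiable ℂ f) {z₀ : ℂ} (h0 : f z₀ = 0) :
    ∃ g : ℂ → ℂ, Differentiable ℂ g ∧ ∀ z, f z = (z - z₀) * g z := by
  refine ⟨dslope f z₀, fun z => ?_, fun z => ?_⟩
  · rcases eq_or_ne z z₀ with rfl | hz
    · obtain ⟨p, hp⟩ := hf.analyticAt z
      exact hp.has_fpower_series_dslope_fslope.analyticAt.differentiableAt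
    · exact (differentiableAt_dslope_of_ne hz).mpr (hf z)
  · have := sub_smul_dslope f z₀ z
    rw [smul_eq_mul] at this
    rw [this, h0, sub_zero]

/-- If an entire function vanishes frequently near a point, it is zero everywhere. -/
lemma aux_global_zero {f : ℂ → ℂ} (hfd : Differentiable ℂ f) {x : ℂ}
    (hx : ∀ᶠ z in nhds x, f z = 0) (z : ℂ) : f z = 0 := by
  have hAn : AnalyticOnNhd ℂ f univ := fun z _ => hfd.analyticAt z
  have := hAn.eqOn_zero_of_preconnected_of_eventuallyEq_zero isPreconnected_univ
    (mem_univ x) hx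
  exact this (mem_univ z)

lemma aux_zeros_finite {f : ℂ → ℂ} (hfd : Differentiable ℂ f) {z₁ : ℂ} (hz₁ : f z₁ ≠ 0)
    {K : Set ℂ} (hK : IsCompact K) : {z ∈ K | f z = 0}.Finite := by
  by_contra hinf
  have hinf' : Set.Infinite {z ∈ K | f z = 0} := hinf
  obtain ⟨x, -, hacc⟩ := hinf'.exists_accPt_of_subset_isCompact hK (sep_subset _ _)
  rw [accPt_iff_frequently] at hacc
  have hfreq : ∃ᶠ z in nhdsWithin x {x}ᶜ, f z = 0 := by
    rw [frequently_nhdsWithin_iff]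
    exact hacc.mono fun y hy => ⟨hy.2.2, hy.1⟩
  have hev := (hfd.analyticAt x).frequently_zero_iff_eventually_zero.mp hfreq
  exact hz₁ (aux_global_zero hfd hev z₁)

lemma aux_order_finite {f : ℂ → ℂ} (hfd : Differentiable ℂ f) {z₁ : ℂ} (hz₁ : f z₁ ≠ 0)
    (z : ℂ) : analyticOrderAt f z ≠ ⊤ := by
  intro h
  rw [analyticOrderAt_eq_top] at h
  exact hz₁ (aux_global_zero hfd h z₁)

open scoped Classical in
/-- Order of vanishing as a natural number. -/
noncomputable def ordN (f : ℂ → ℂ) (z : ℂ) : ℕ :=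
  if h : AnalyticAt ℂ f z then (analyticOrderAt f z).toNat else 0

lemma ordN_eq {f : ℂ → ℂ} (hfd : Differentiable ℂ f) (z : ℂ) :
    ordN f z = (analyticOrderAt f z).toNat := by
  rw [ordN]
  rw [dif_pos (hfd.analyticAt z)]

lemma aux_ordN_pos {f : ℂ → ℂ} (hfd : Differentiable ℂ f) {z₁ : ℂ} (hz₁ : f z₁ ≠ 0)
    {z₀ : ℂ} (h0 : f z₀ = 0) : 1 ≤ ordN f z₀ := by
  rw [ordN_eq hfd]
  have hfin := aux_order_finite hfd hz₁ z₀
  rcases Nat.eq_zero_or_pos (analyticOrderAt f z₀).toNat with h | h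
  · exfalso
    have : analyticOrderAt f z₀ = (0 : ℕ) := by
      have := ENat.coe_toNat hfin
      rw [h] at this
      exact_mod_cast this.symm
    obtain ⟨g, -, hgne, hev⟩ := ((hfd.analyticAt z₀).analyticOrderAt_eq_natCast).mp this
    have := hev.self_of_nhds
    simp only [pow_zero, one_smul] at this
    exact hgne (this ▸ h0)
  · exact h

lemma aux_ord_rel {f g : ℂ → ℂ} (hfd : Differentiable ℂ f) (hgd : Differentiable ℂ g)
    {z₀ : ℂ} (hfac : ∀ z, f z = (z - z₀) * g z) {z₁ : ℂ} (hg₁ : g z₁ ≠ 0) :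
    (∀ z : ℂ, z ≠ z₀ → ordN f z = ordN g z) ∧ ordN f z₀ = ordN g z₀ + 1 := by
  have key : ∀ z : ℂ, (z ≠ z₀ → ordN f z = ordN g z) ∧ (z = z₀ → ordN f z = ordN g z + 1) := by
    intro z
    have hgfin := aux_order_finite hgd hg₁ z
    obtain ⟨nz, hnz⟩ := WithTop.ne_top_iff_exists.mp hgfin
    obtain ⟨h, hh_an, hh_ne, hh_ev⟩ := ((hgd.analyticAt z).analyticOrderAt_eq_natCast).mp hnz.symm
    constructor
    · intro hzz
      have horder : analyticOrderAt f z = (nz : ℕ∞) := by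
        rw [(hfd.analyticAt z).analyticOrderAt_eq_natCast]
        refine ⟨fun y => (y - z₀) * h y,
          ((analyticAt_id.sub analyticAt_const).mul hh_an), ?_, ?_⟩
        · exact mul_ne_zero (sub_ne_zero.mpr hzz) hh_ne
        · filter_upwards [hh_ev] with y hy
          rw [hfac y, hy]
          simp only [smul_eq_mul]
          ring
      rw [ordN_eq hfd, ordN_eq hgd, horder, ← hnz]
      rfl
    · rintro rfl
      have horder : analyticOrderAt f z = ((nz + 1 : ℕ) : ℕ∞) := by
        rw [(hfd.analyticAt z).analyticOrderAt_eq_natCast]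
        refine ⟨h, hh_an, hh_ne, ?_⟩
        filter_upwards [hh_ev] with y hy
        rw [hfac y, hy]
        simp only [smul_eq_mul]
        ring
      rw [ordN_eq hfd, ordN_eq hgd, horder, ← hnz]
      rw [show ((nz + 1 : ℕ) : ℕ∞) = ((nz : ℕ∞) + 1) by push_cast; rfl]
      simp only [ENat.toNat_add (by simp : (nz : ℕ∞) ≠ ⊤) (by simp : (1 : ℕ∞) ≠ ⊤)]
      rfl
  exact ⟨fun z hz => (key z).1 hz, (key z₀).2 rfl⟩

lemma aux_factor {R : ℝ} (hR : 0 < R) (n : ℕ) :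
    ∀ (f : ℂ → ℂ) (hfd : Differentiable ℂ f), (∀ z ∈ sphere (0 : ℂ) R, f z ≠ 0) →
    ∀ (hfin : {z ∈ closedBall (0 : ℂ) R | f z = 0}.Finite),
    (∑ z ∈ hfin.toFinset, ordN f z ≤ n) →
    ∃ (k : ℕ) (zs : Fin k → ℂ) (g : ℂ → ℂ),
      (∀ i, zs i ∈ ball (0 : ℂ) R) ∧ Differentiable ℂ g ∧
      (∀ z ∈ closedBall (0 : ℂ) R, g z ≠ 0) ∧ ∀ z, f z = (∏ i, (z - zs i)) * g z := by
  induction n with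
  | zero =>
      intro f hfd hsp hfin hsum
      refine ⟨0, fun i => i.elim0, f, fun i => i.elim0, hfd, ?_, fun z => by simp⟩
      intro z hz h0
      -- a zero would force the sum to be positive
      have hz₁ : f (R : ℂ) ≠ 0 := by
        apply hsp
        simp [mem_sphere_iff_norm, Complex.norm_real, abs_of_pos hR]
      have hmem : z ∈ hfin.toFinset := by
        rw [Set.Finite.mem_toFinset]
        exact ⟨hz, h0⟩
      have h6 := Finset.single_le_sum (f := fun w => ordN f w) (fun i _ => Nat.zero_le _) hmem
      have hpos := aux_ordN_pos hfd hz₁ h0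
      omega
  | succ n ih =>
      intro f hfd hsp hfin hsum
      by_cases hzero : ∀ z ∈ closedBall (0 : ℂ) R, f z ≠ 0
      · exact ⟨0, fun i => i.elim0, f, fun i => i.elim0, hfd, hzero, fun z => by simp⟩
      push_neg at hzero
      obtain ⟨z₀, hz₀cb, hz₀0⟩ := hzero
      have hz₁ : f (R : ℂ) ≠ 0 := by
        apply hsp
        simp [mem_sphere_iff_norm, Complex.norm_real, abs_of_pos hR]
      have hz₀b : z₀ ∈ ball (0 : ℂ) R := by
        rw [mem_ball]
        rcases lt_or_eq_of_le (mem_closedBall.mp hz₀cb) with h | h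
        · exact h
        · exact absurd hz₀0 (hsp z₀ (by rwa [mem_sphere]))
      obtain ⟨g, hgd, hfac⟩ := aux_strip hfd hz₀0
      have hg₁ : g (R : ℂ) ≠ 0 := by
        intro h
        apply hz₁
        rw [hfac, h, mul_zero]
      have hgsp : ∀ z ∈ sphere (0 : ℂ) R, g z ≠ 0 := by
        intro z hz h
        exact hsp z hz (by rw [hfac, h, mul_zero])
      have hgfin : {z ∈ closedBall (0 : ℂ) R | g z = 0}.Finite :=
        aux_zeros_finite hgd hg₁ (isCompact_closedBall _ _)
      obtain ⟨hrel1, hrel2⟩ := aux_ord_rel hfd hgd hfac hg₁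
      -- sum bound for g
      have hsub : hgfin.toFinset ⊆ hfin.toFinset := by
        intro z hz
        rw [Set.Finite.mem_toFinset] at *
        exact ⟨hz.1, by rw [hfac, hz.2, mul_zero]⟩
      have hz₀mem : z₀ ∈ hfin.toFinset := by
        rw [Set.Finite.mem_toFinset]; exact ⟨hz₀cb, hz₀0⟩
      have hsum_g : ∑ z ∈ hgfin.toFinset, ordN g z ≤ n := by
        have h1 : ∑ z ∈ hgfin.toFinset, ordN g z ≤ ∑ z ∈ hfin.toFinset, ordN g z :=
          Finset.sum_le_sum_of_subset hsub
        have h2 : ∑ z ∈ hfin.toFinset, ordN f z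
            = ∑ z ∈ hfin.toFinset.erase z₀, ordN f z + ordN f z₀ :=
          (Finset.sum_erase_add _ _ hz₀mem).symm
        have h3 : ∑ z ∈ hfin.toFinset, ordN g z
            = ∑ z ∈ hfin.toFinset.erase z₀, ordN g z + ordN g z₀ :=
          (Finset.sum_erase_add _ _ hz₀mem).symm
        have h4 : ∑ z ∈ hfin.toFinset.erase z₀, ordN g z
            = ∑ z ∈ hfin.toFinset.erase z₀, ordN f z := by
          apply Finset.sum_congr rfl
          intro z hz
          exact (hrel1 z (Finset.mem_erase.mp hz).1).symm
        omega
      obtain ⟨k, zs, g', hzs, hg'd, hg'ne, hfac'⟩ := ih g hgd hgsp hgfin hsum_g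
      refine ⟨k + 1, Fin.cons z₀ zs, g', ?_, hg'd, hg'ne, ?_⟩
      · intro i
        refine Fin.cases ?_ ?_ i
        · exact hz₀b
        · exact hzs
      · intro z
        rw [hfac z, hfac' z, Fin.prod_univ_succ]
        simp only [Fin.cons_zero, Fin.cons_succ]
        ring


end Stmt10
end

/-- For `f(z) = Σ_k ξ_k e^{-αk²} z^k` with arbitrary signs `ξ_k ∈ {±1}` and `α ≥ log 3`,
for every sufficiently large `m` the function `f` has exactly `m` zeros (with multiplicity)
in the closed disk `{|z| ≤ e^{2αm}}`. -/
theorem stmt_10 (α : ℝ) (hα : Real.log 3 ≤ α) (ξ : ℕ → ℝ) (hξ : ∀ k, ξ k = 1 ∨ ξ k = -1)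
    (f : ℂ → ℂ)
    (hf : ∀ z, f z = ∑' k : ℕ, ((ξ k * Real.exp (-(α * k ^ 2)) : ℝ) : ℂ) * z ^ k) :
    ∃ M : ℕ, ∀ m : ℕ, M ≤ m →
      ∃ (z : Fin m → ℂ) (g : ℂ → ℂ),
        (∀ i, ‖z i‖ ≤ Real.exp (2 * α * m)) ∧
        (∀ w ∈ Metric.closedBall (0 : ℂ) (Real.exp (2 * α * m)), AnalyticAt ℂ g w ∧ g w ≠ 0) ∧
        (∀ w ∈ Metric.closedBall (0 : ℂ) (Real.exp (2 * α * m)),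
          f w = (∏ i, (w - z i)) * g w) := by
  refine ⟨0, fun m _ => ?_⟩
  set c : ℕ → ℂ := fun k => ((ξ k * Real.exp (-(α * k ^ 2)) : ℝ) : ℂ) with hcdef
  have hα1 : (1 : ℝ) ≤ α := by
    have h3 : Real.exp 1 ≤ 3 := le_of_lt (lt_of_lt_of_le Real.exp_one_lt_d9 (by norm_num))
    have := (Real.le_log_iff_exp_le (by norm_num : (0:ℝ) < 3)).mpr h3
    linarith
  have hα3 : Real.exp (-α) ≤ 1 / 3 := by
    have h1 : Real.exp (-α) ≤ Real.exp (-(Real.log 3)) :=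
      Real.exp_le_exp.mpr (neg_le_neg hα)
    have h2 : Real.exp (-(Real.log 3)) = 1 / 3 := by
      rw [Real.exp_neg, Real.exp_log (by norm_num : (0:ℝ) < 3)]
      norm_num
    linarith
  have hc : ∀ k : ℕ, ‖c k‖ = Real.exp (-(α * k ^ 2)) := by
    intro k
    rw [hcdef]
    rw [Complex.norm_real, Real.norm_eq_abs, abs_mul, Real.abs_exp]
    rcases hξ k with h | h <;> rw [h] <;> norm_num
  have hfeq : f = fun z : ℂ => ∑' k : ℕ, c k * z ^ k := funext fun z => hf z
  have hfd : Differentiable ℂ f := hfeq ▸ Stmt10.aux_entire hα1 hc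
  set R : ℝ := Real.exp (2 * α * m) with hRdef
  have hR : 0 < R := Real.exp_pos _
  have hcm : c m ≠ 0 := by
    intro h
    have := hc m
    rw [h, norm_zero] at this
    exact (Real.exp_pos _).ne this
  have hnormcm : ∀ z : ℂ, ‖z‖ = R → ‖c m * z ^ m‖ = Real.exp (α * m ^ 2) := by
    intro z hz
    rw [norm_mul, norm_pow, hc, hz, hRdef, ← Real.exp_nat_mul, ← Real.exp_add]
    congr 1
    ring
  have hest : ∀ z ∈ Metric.sphere (0 : ℂ) R, ‖f z - c m * z ^ m‖ < ‖c m * z ^ m‖ := by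
    intro z hz
    rw [Metric.mem_sphere, dist_zero_right] at hz
    have h1 := Stmt10.aux_estimate hα1 hα3 hc m (z := z) (by rw [hz])
    rw [hfeq]
    have h2 := hnormcm z hz
    rw [h2]
    calc ‖(∑' k : ℕ, c k * z ^ k) - c m * z ^ m‖ ≤ 3 / 4 * Real.exp (α * m ^ 2) := h1
      _ < Real.exp (α * m ^ 2) := by nlinarith [Real.exp_pos (α * (m:ℝ) ^ 2)]
  have hsp : ∀ z ∈ Metric.sphere (0 : ℂ) R, f z ≠ 0 := by
    intro z hz h0
    have := hest z hz
    rw [h0, zero_sub, norm_neg] at this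
    exact lt_irrefl _ this
  have hz₁ : f (R : ℂ) ≠ 0 := by
    apply hsp
    simp [Metric.mem_sphere, Complex.norm_real, abs_of_pos hR]
  have hfin : {z ∈ Metric.closedBall (0 : ℂ) R | f z = 0}.Finite :=
    Stmt10.aux_zeros_finite hfd hz₁ (isCompact_closedBall _ _)
  obtain ⟨k, zs, g, hzs, hgd, hgne, hfac⟩ :=
    Stmt10.aux_factor hR (∑ z ∈ hfin.toFinset, Stmt10.ordN f z) f hfd hsp hfin le_rfl
  have hcount1 : (∮ z in C(0, R), deriv f z / f z) = 2 * Real.pi * I * k :=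
    Stmt10.aux_count hR k f g zs hgd hzs hgne hfac
  have hcount2 : (∮ z in C(0, R), deriv f z / f z) = 2 * Real.pi * I * m :=
    Stmt10.aux_int_m hfd m hR hcm hest
  have h2pi : (2 * (Real.pi : ℂ) * I) ≠ 0 := by
    simp [Real.pi_ne_zero, Complex.I_ne_zero]
  have hkm : k = m := by
    have h := hcount1.symm.trans hcount2
    have : (k : ℂ) = (m : ℂ) := mul_left_cancel₀ h2pi h
    exact_mod_cast this
  subst hkm
  refine ⟨zs, g, ?_, ?_, ?_⟩
  · intro i
    have := hzs i
    rw [Metric.mem_ball, dist_zero_right] at this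
    exact le_of_lt this
  · exact fun w hw => ⟨(hgd.analyticAt w), hgne w hw⟩
  · exact fun w _ => hfac w
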